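/- Every monochromatic symmetrized Fitch map on X (|X| ≥ 3) can be explained by an edge-labeled tree (T, λ) of diameter at most 4, i.e., every path in T has at most 4 edges. -/

import Mathlib

open SimpleGraph

/-- A phylogenetic (unrooted) tree with leaf set `X`: a finite connected acyclic
simple graph in which the leaves of `X` are injectively embedded as vertices of
degree at most one, and all other (inner) vertices have degree at least three. -/
structure PhyloTree (X : Type) where
  V : Type
  [finV : Fintype V]
  T : SimpleGraph V
  conn : T.Connected
  acyc : T.IsAcyclic
  leaf : X → V
  leaf_inj : Function.Injective leaf
  leaf_deg : ∀ x : X, (T.neighborSet (leaf x)).ncard ≤ 1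
  inner_deg : ∀ v : V, v ∉ Set.range leaf → 3 ≤ (T.neighborSet v).ncard

/-- `(t, lab)` explains `ε`: for distinct leaves `x,y`, a color `m` belongs to
`ε x y` iff the (unique) path from `x` to `y` in `t` contains an `m`-edge. -/
def Explains {X M : Type} (t : PhyloTree X) (lab : Sym2 t.V → Set M)
    (ε : X → X → Set M) : Prop :=
  ∀ x y : X, x ≠ y → ∀ p : t.T.Walk (t.leaf x) (t.leaf y), p.IsPath →
    ∀ m : M, m ∈ ε x y ↔ ∃ e ∈ p.edges, m ∈ lab e

/-- `ε` is a symmetrized Fitch map: some edge-labeled tree explains it. -/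
def IsSymFitch {X M : Type} (ε : X → X → Set M) : Prop :=
  ∃ t : PhyloTree X, ∃ lab : Sym2 t.V → Set M, Explains t lab ε

/-- The tree `t` displays the subsplit `A|B`: some edge of `t` separates the
leaves in `A` from the leaves in `B`. -/
def Displays {X : Type} (t : PhyloTree X) (A B : Set X) : Prop :=
  ∃ u v : t.V, t.T.Adj u v ∧
    (∀ x ∈ A, (t.T.deleteEdges {s(u,v)}).Reachable (t.leaf x) u) ∧
    (∀ x ∈ B, (t.T.deleteEdges {s(u,v)}).Reachable (t.leaf x) v)

/-- The complementary neighborhood `N_m[y]` of `y` w.r.t. color `m`. -/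
def Nbr {X M : Type} (ε : X → X → Set M) (m : M) (y : X) : Set X :=
  {x | x = y ∨ m ∉ ε x y}

/-- Every monochromatic symmetrized Fitch map on `X` (`|X| ≥ 3`) can be
explained by an edge-labeled tree of diameter at most `4`. -/

lemma exists_two_nbrs {V : Type} {G : SimpleGraph V} {u : V} (c : G.Walk u u) (hc : c.IsCycle) :
    ∃ b d, b ≠ d ∧ G.Adj u b ∧ G.Adj u d ∧ b ∈ c.support ∧ d ∈ c.support := by
  cases c with
  | nil => exact absurd hc (Walk.IsCycle.not_of_nil)
  | @cons _ b _ hadj p =>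
    obtain ⟨x, q, h', heq⟩ := Walk.exists_cons_eq_concat hadj p
    have hlen : 3 ≤ (Walk.cons hadj p).length := hc.three_le_length
    have hqlen : q.edges ≠ [] := by
      have h1 : (Walk.cons hadj p).length = q.length + 1 := by
        rw [heq, Walk.length_concat]
      have h2 : 2 ≤ q.length := by omega
      intro hnil
      rw [← Walk.length_edges, hnil] at h2
      simp at h2
    have hedges : (Walk.cons hadj p).edges = q.edges ++ [s(x, u)] := by
      rw [heq, Walk.concat_eq_append, Walk.edges_append]
      simp
    have hcat : q.edges ++ [s(x, u)] = s(u, b) :: p.edges := by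
      rw [← hedges]; simp
    have hbd : b ≠ x := by
      intro hbx
      have hnd := hc.isTrail.edges_nodup
      rw [hedges] at hnd
      have hndq : s(x, u) ∉ q.edges := by
        have := (List.nodup_append.mp hnd).2.2
        intro hmem
        exact this _ hmem _ (List.mem_singleton_self _) rfl
      cases hqe : q.edges with
      | nil => exact hqlen hqe
      | cons e0 t =>
        rw [hqe] at hcat
        simp only [List.cons_append, List.cons.injEq] at hcat
        apply hndq
        rw [hqe, ← hbx]
        rw [Sym2.eq_swap] at hcat
        exact hcat.1 ▸ List.mem_cons_self
    refine ⟨b, x, hbd, hadj, h'.symm, ?_, ?_⟩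
    · simp [Walk.support_cons]
    · have hx : x ∈ q.support := Walk.end_mem_support q
      rw [heq, Walk.concat_eq_append, Walk.support_append]
      rw [List.mem_append]
      left
      exact hx

lemma acyclic_of_parent {V : Type} (G : SimpleGraph V) (par : V → V) (rk : V → ℕ)
    (h : ∀ a b, G.Adj a b → (b = par a ∧ rk b < rk a) ∨ (a = par b ∧ rk a < rk b)) :
    G.IsAcyclic := by
  classical
  intro v c hc
  obtain ⟨u, hu, hmax⟩ := c.support.toFinset.exists_max_image rk ⟨v, by simp⟩
  rw [List.mem_toFinset] at hu
  have hc' := hc.rotate hu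
  obtain ⟨b, d, hbd, hub, hud, hbs, hds⟩ := exists_two_nbrs _ hc'
  have hmem : ∀ w, w ∈ (c.rotate u hu).support → w ∈ c.support := by
    intro w hw
    rw [Walk.support_eq_cons] at hw
    rcases List.mem_cons.mp hw with rfl | hw
    · exact hu
    · exact List.mem_of_mem_tail ((Walk.support_rotate c u hu).mem_iff.mp hw)
  have hb : rk b ≤ rk u := hmax b (List.mem_toFinset.2 (hmem b hbs))
  have hd : rk d ≤ rk u := hmax d (List.mem_toFinset.2 (hmem d hds))
  have hb' : b = par u := by
    rcases h u b hub with ⟨h1, _⟩ | ⟨_, h2⟩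
    · exact h1
    · omega
  have hd' : d = par u := by
    rcases h u d hud with ⟨h1, _⟩ | ⟨_, h2⟩
    · exact h1
    · omega
  exact hbd (hb'.trans hd'.symm)

lemma connected_of_parent {V : Type} (G : SimpleGraph V) (par : V → V) (rk : V → ℕ) (root : V)
    (hadj : ∀ v, v ≠ root → G.Adj v (par v)) (hrk : ∀ v, v ≠ root → rk (par v) < rk v) :
    G.Connected := by
  have key : ∀ n (v : V), rk v = n → G.Reachable v root := by
    intro n
    induction n using Nat.strong_induction_on with
    | _ n ih =>
      intro v hv
      by_cases h : v = root
      · subst h; exact Reachable.refl _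
      · exact ((hadj v h).reachable).trans (ih _ (hv ▸ hrk v h) _ rfl)
  have : Nonempty V := ⟨root⟩
  refine ⟨fun a b => ?_⟩
  exact (key _ a rfl).trans (key _ b rfl).symm

namespace MFD

variable {X : Type} (s : Setoid X) (q0 : Quotient s)

/-- A class is big if it is distinct from the chosen class `q0` and has two elements. -/
def BigC (q : Quotient s) : Prop :=
  q ≠ q0 ∧ ∃ a b : X, a ≠ b ∧ Quotient.mk s a = q ∧ Quotient.mk s b = q

/-- Vertex set: `none` is the center, `some (inl x)` is leaf `x`,
`some (inr q)` is the inner vertex of the big class `q`. -/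
abbrev W := Option (X ⊕ {q : Quotient s // BigC s q0 q})

instance [Finite X] : Finite (W s q0) := by
  haveI : Finite (Quotient s) := Quotient.finite s
  haveI : Finite (X ⊕ {q : Quotient s // BigC s q0 q}) := inferInstance
  exact Finite.of_equiv _ (Equiv.optionEquivSumPUnit.{0,0} _).symm

open Classical in
/-- the hub of a class -/
noncomputable def hubQ (q : Quotient s) : W s q0 :=
  if h : BigC s q0 q then some (Sum.inr ⟨q, h⟩) else none

/-- the hub of a leaf: the vertex it is attached to -/
noncomputable def hub (x : X) : W s q0 := hubQ s q0 (Quotient.mk s x)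

noncomputable def par : W s q0 → W s q0
  | none => none
  | some (Sum.inr _) => none
  | some (Sum.inl x) => hub s q0 x

open Classical in
noncomputable def rk : W s q0 → ℕ
  | none => 0
  | some (Sum.inr _) => 1
  | some (Sum.inl x) => if BigC s q0 (Quotient.mk s x) then 2 else 1

@[simp] lemma par_none : par s q0 none = none := rfl
@[simp] lemma par_inr (q) : par s q0 (some (Sum.inr q)) = none := rfl
@[simp] lemma par_inl (x : X) : par s q0 (some (Sum.inl x)) = hub s q0 x := rfl

lemma hub_of_big {x : X} (h : BigC s q0 (Quotient.mk s x)) :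
    hub s q0 x = some (Sum.inr ⟨Quotient.mk s x, h⟩) := by
  unfold hub hubQ
  rw [dif_pos h]

lemma hub_of_not_big {x : X} (h : ¬ BigC s q0 (Quotient.mk s x)) :
    hub s q0 x = none := by
  unfold hub hubQ
  rw [dif_neg h]

lemma hub_ne_inl (x y : X) : hub s q0 x ≠ some (Sum.inl y) := by
  by_cases h : BigC s q0 (Quotient.mk s x)
  · rw [hub_of_big s q0 h]
    exact fun hh => Sum.inr_ne_inl (Option.some.inj hh)
  · rw [hub_of_not_big s q0 h]
    simp

lemma par_ne_inl (v : W s q0) (y : X) : par s q0 v ≠ some (Sum.inl y) := by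
  cases v with
  | none => simp
  | some w =>
    cases w with
    | inl x => exact hub_ne_inl s q0 x y
    | inr q => simp

lemma rk_par_lt (v : W s q0) (hv : v ≠ none) : rk s q0 (par s q0 v) < rk s q0 v := by
  cases v with
  | none => exact absurd rfl hv
  | some w =>
    cases w with
    | inr q => simp [rk]
    | inl x =>
      simp only [par_inl]
      by_cases h : BigC s q0 (Quotient.mk s x)
      · rw [hub_of_big s q0 h]
        simp [rk, h]
      · rw [hub_of_not_big s q0 h]
        simp [rk, h]

/-- The graph. -/
noncomputable def G : SimpleGraph (W s q0) where
  Adj a b := a ≠ b ∧ (b = par s q0 a ∨ a = par s q0 b)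
  symm := by
    constructor
    rintro a b ⟨h1, h2⟩
    exact ⟨h1.symm, h2.symm⟩
  loopless := by constructor; rintro a ⟨h1, _⟩; exact h1 rfl

lemma adj_iff {a b : W s q0} : (G s q0).Adj a b ↔ a ≠ b ∧ (b = par s q0 a ∨ a = par s q0 b) :=
  Iff.rfl

lemma adj_par_or (a b : W s q0) (h : (G s q0).Adj a b) :
    (b = par s q0 a ∧ rk s q0 b < rk s q0 a) ∨ (a = par s q0 b ∧ rk s q0 a < rk s q0 b) := by
  obtain ⟨hne, h2⟩ := h
  rcases h2 with h2 | h2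
  · left
    refine ⟨h2, ?_⟩
    subst h2
    apply rk_par_lt
    rintro rfl
    exact hne rfl
  · right
    refine ⟨h2, ?_⟩
    subst h2
    apply rk_par_lt
    rintro rfl
    exact hne rfl

lemma acyc : (G s q0).IsAcyclic :=
  acyclic_of_parent _ (par s q0) (rk s q0) (adj_par_or s q0)

lemma adj_par (v : W s q0) (hv : v ≠ none) : (G s q0).Adj v (par s q0 v) := by
  refine ⟨?_, Or.inl rfl⟩
  intro h
  have := rk_par_lt s q0 v hv
  rw [← h] at this
  omega

lemma conn : (G s q0).Connected := by
  apply connected_of_parent _ (par s q0) (rk s q0) none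
  · intro v hv; exact adj_par s q0 v hv
  · intro v hv
    have h : par s q0 none = none := rfl
    exact rk_par_lt s q0 v hv

lemma adj_leaf_hub (x : X) : (G s q0).Adj (some (Sum.inl x)) (hub s q0 x) := by
  have := adj_par s q0 (some (Sum.inl x)) (by simp)
  simpa using this

lemma nbr_leaf (x : X) : (G s q0).neighborSet (some (Sum.inl x)) = {hub s q0 x} := by
  ext b
  simp only [mem_neighborSet, Set.mem_singleton_iff]
  constructor
  · rintro ⟨hne, h | h⟩
    · exact h
    · exact absurd h.symm (par_ne_inl s q0 b x)
  · rintro rfl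
    exact adj_leaf_hub s q0 x

lemma leaf_deg (x : X) : ((G s q0).neighborSet (some (Sum.inl x))).ncard ≤ 1 := by
  rw [nbr_leaf]
  simp

lemma hub_eq_of_mk_eq {x y : X} (h : Quotient.mk s x = Quotient.mk s y) :
    hub s q0 x = hub s q0 y := by
  unfold hub
  rw [h]

end MFD
namespace MFD
variable {X : Type} (s : Setoid X) (q0 : Quotient s)

lemma adj_inr_none (q : {q : Quotient s // BigC s q0 q}) :
    (G s q0).Adj (some (Sum.inr q)) none := by
  have := adj_par s q0 (some (Sum.inr q)) (by simp)
  simpa using this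

lemma inner_deg_inr [Finite X] (q : {q : Quotient s // BigC s q0 q}) :
    3 ≤ ((G s q0).neighborSet (some (Sum.inr q))).ncard := by
  obtain ⟨hne, a, b, hab, ha, hb⟩ := q.2
  have hBa : BigC s q0 (Quotient.mk s a) := ha ▸ q.2
  have hBb : BigC s q0 (Quotient.mk s b) := hb ▸ q.2
  have hadja : (G s q0).Adj (some (Sum.inr q)) (some (Sum.inl a)) := by
    have := adj_leaf_hub s q0 a
    rw [hub_of_big s q0 hBa] at this
    have hq : (⟨Quotient.mk s a, hBa⟩ : {q : Quotient s // BigC s q0 q}) = q := Subtype.ext ha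
    rw [hq] at this
    exact this.symm
  have hadjb : (G s q0).Adj (some (Sum.inr q)) (some (Sum.inl b)) := by
    have := adj_leaf_hub s q0 b
    rw [hub_of_big s q0 hBb] at this
    have hq : (⟨Quotient.mk s b, hBb⟩ : {q : Quotient s // BigC s q0 q}) = q := Subtype.ext hb
    rw [hq] at this
    exact this.symm
  have d1 : (none : W s q0) ≠ some (Sum.inl a) := by simp
  have d2 : (none : W s q0) ≠ some (Sum.inl b) := by simp
  have d3 : (some (Sum.inl a) : W s q0) ≠ some (Sum.inl b) := by simp [hab]
  have h3 : 2 < ((G s q0).neighborSet (some (Sum.inr q))).ncard := by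
    rw [Set.two_lt_ncard (Set.toFinite _)]
    exact ⟨none, adj_inr_none s q0 q, some (Sum.inl a), hadja, some (Sum.inl b), hadjb,
      d1, d2, d3⟩
  omega

lemma inner_deg_none [Finite X]
    (hq0 : (∃ q, BigC s q0 q) → ∃ a b : X, a ≠ b ∧ Quotient.mk s a = q0 ∧ Quotient.mk s b = q0)
    (hX : ∃ a b c : X, a ≠ b ∧ a ≠ c ∧ b ≠ c) :
    3 ≤ ((G s q0).neighborSet (none : W s q0)).ncard := by
  have key : ∀ x : X, ¬ BigC s q0 (Quotient.mk s x) → (G s q0).Adj none (some (Sum.inl x)) := by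
    intro x hx
    have := adj_leaf_hub s q0 x
    rw [hub_of_not_big s q0 hx] at this
    exact this.symm
  have h3 : 2 < ((G s q0).neighborSet (none : W s q0)).ncard := by
    rw [Set.two_lt_ncard (Set.toFinite _)]
    by_cases hex : ∃ q, BigC s q0 q
    · obtain ⟨q, hq⟩ := hex
      obtain ⟨a, b, hab, ha, hb⟩ := hq0 ⟨q, hq⟩
      have hna : ¬ BigC s q0 (Quotient.mk s a) := fun h => h.1 ha
      have hnb : ¬ BigC s q0 (Quotient.mk s b) := fun h => h.1 hb
      have d1 : (some (Sum.inr ⟨q, hq⟩) : W s q0) ≠ some (Sum.inl a) := by simp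
      have d2 : (some (Sum.inr ⟨q, hq⟩) : W s q0) ≠ some (Sum.inl b) := by simp
      have d3 : (some (Sum.inl a) : W s q0) ≠ some (Sum.inl b) := by simp [hab]
      exact ⟨some (Sum.inr ⟨q, hq⟩), (adj_inr_none s q0 ⟨q, hq⟩).symm,
        some (Sum.inl a), key a hna, some (Sum.inl b), key b hnb, d1, d2, d3⟩
    · push_neg at hex
      obtain ⟨a, b, c, hab, hac, hbc⟩ := hX
      have d1 : (some (Sum.inl a) : W s q0) ≠ some (Sum.inl b) := by simp [hab]
      have d2 : (some (Sum.inl a) : W s q0) ≠ some (Sum.inl c) := by simp [hac]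
      have d3 : (some (Sum.inl b) : W s q0) ≠ some (Sum.inl c) := by simp [hbc]
      exact ⟨some (Sum.inl a), key a (hex _), some (Sum.inl b), key b (hex _),
        some (Sum.inl c), key c (hex _), d1, d2, d3⟩
  omega

/-- whether a vertex makes an `m`-edge with the center -/
def ctag (v : W s q0) : Prop :=
  (∃ q, v = some (Sum.inr q)) ∨ (∃ x : X, v = some (Sum.inl x) ∧ Quotient.mk s x ≠ q0)

def mk2 (a b : W s q0) : Prop := (a = none ∧ ctag s q0 b) ∨ (b = none ∧ ctag s q0 a)

open Classical in
noncomputable def lab (M : Type) (m : M) : Sym2 (W s q0) → Set M :=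
  Sym2.lift ⟨fun a b => if mk2 s q0 a b then {m} else (∅ : Set M), by
    intro a b
    have h : mk2 s q0 a b = mk2 s q0 b a := by unfold mk2; rw [or_comm]
    simp only [h]⟩

open Classical in
lemma lab_mk (M : Type) (m : M) (a b : W s q0) :
    lab s q0 M m s(a, b) = if mk2 s q0 a b then {m} else (∅ : Set M) := by
  simp [lab]

lemma lab_subset (M : Type) (m : M) (e : Sym2 (W s q0)) : lab s q0 M m e ⊆ {m} := by
  induction e using Sym2.ind with
  | _ a b =>
    rw [lab_mk]
    split
    · exact le_refl _
    · exact Set.empty_subset _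

lemma mem_lab_iff (M : Type) (m : M) (a b : W s q0) :
    m ∈ lab s q0 M m s(a, b) ↔ mk2 s q0 a b := by
  rw [lab_mk]
  split <;> rename_i h <;> simp [h]

@[simp] lemma mk2_inl_inl (x y : X) :
    ¬ mk2 s q0 (some (Sum.inl x)) (some (Sum.inl y)) := by simp [mk2]

@[simp] lemma mk2_inl_inr (x : X) (q) :
    ¬ mk2 s q0 (some (Sum.inl x)) (some (Sum.inr q)) := by simp [mk2]

@[simp] lemma mk2_inr_inl (x : X) (q) :
    ¬ mk2 s q0 (some (Sum.inr q)) (some (Sum.inl x)) := by simp [mk2]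

@[simp] lemma mk2_inr_none (q) : mk2 s q0 (some (Sum.inr q)) none :=
  Or.inr ⟨rfl, Or.inl ⟨q, rfl⟩⟩

@[simp] lemma mk2_none_inr (q) : mk2 s q0 none (some (Sum.inr q)) :=
  Or.inl ⟨rfl, Or.inl ⟨q, rfl⟩⟩

lemma ctag_inl (x : X) : ctag s q0 (some (Sum.inl x)) ↔ Quotient.mk s x ≠ q0 := by
  constructor
  · rintro (⟨q, hq⟩ | ⟨x', hx', hne⟩)
    · exact absurd (Option.some.inj hq) (by simp)
    · have hxx : x = x' := by
        have := Option.some.inj hx'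
        exact Sum.inl.inj this
      exact hxx ▸ hne
  · intro h
    exact Or.inr ⟨x, rfl, h⟩

@[simp] lemma mk2_inl_none (x : X) :
    mk2 s q0 (some (Sum.inl x)) none ↔ Quotient.mk s x ≠ q0 := by
  unfold mk2
  rw [ctag_inl]
  simp

@[simp] lemma mk2_none_inl (x : X) :
    mk2 s q0 none (some (Sum.inl x)) ↔ Quotient.mk s x ≠ q0 := by
  unfold mk2
  rw [ctag_inl]
  simp

section walks

variable (x y : X)

/-- canonical walk when the hubs agree -/
noncomputable def wA (h : hub s q0 x = hub s q0 y) :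
    (G s q0).Walk (some (Sum.inl x)) (some (Sum.inl y)) :=
  Walk.cons (adj_leaf_hub s q0 x)
    (Walk.cons (show (G s q0).Adj (hub s q0 x) (some (Sum.inl y)) by
      rw [h]; exact (adj_leaf_hub s q0 y).symm) Walk.nil)

lemma wA_edges (h : hub s q0 x = hub s q0 y) :
    (wA s q0 x y h).edges = [s(some (Sum.inl x), hub s q0 x), s(hub s q0 x, some (Sum.inl y))] := by
  simp [wA]

lemma wA_isPath (hxy : x ≠ y) (h : hub s q0 x = hub s q0 y) : (wA s q0 x y h).IsPath := by
  have n1 : (some (Sum.inl x) : W s q0) ≠ hub s q0 x := fun hh => hub_ne_inl s q0 x x hh.symm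
  have n2 : (some (Sum.inl x) : W s q0) ≠ some (Sum.inl y) := by simp [hxy]
  have n3 : hub s q0 x ≠ (some (Sum.inl y) : W s q0) := hub_ne_inl s q0 x y
  rw [Walk.isPath_def]
  simp only [wA, Walk.support_cons, Walk.support_nil]
  simp [List.nodup_cons, n1, n2, n3]

/-- canonical walk when `x`'s hub is the center and `y`'s is a class vertex -/
noncomputable def wB1 (hx : hub s q0 x = none) (qy) (hy : hub s q0 y = some (Sum.inr qy)) :
    (G s q0).Walk (some (Sum.inl x)) (some (Sum.inl y)) :=
  Walk.cons (show (G s q0).Adj (some (Sum.inl x)) none by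
      rw [← hx]; exact adj_leaf_hub s q0 x)
    (Walk.cons ((adj_inr_none s q0 qy).symm)
      (Walk.cons (show (G s q0).Adj (some (Sum.inr qy)) (some (Sum.inl y)) by
        rw [← hy]; exact (adj_leaf_hub s q0 y).symm) Walk.nil))

lemma wB1_edges (hx : hub s q0 x = none) (qy) (hy : hub s q0 y = some (Sum.inr qy)) :
    (wB1 s q0 x y hx qy hy).edges =
      [s(some (Sum.inl x), none), s(none, some (Sum.inr qy)),
       s(some (Sum.inr qy), some (Sum.inl y))] := by
  simp [wB1]

lemma wB1_isPath (hxy : x ≠ y) (hx : hub s q0 x = none) (qy)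
    (hy : hub s q0 y = some (Sum.inr qy)) : (wB1 s q0 x y hx qy hy).IsPath := by
  have n1 : (some (Sum.inl x) : W s q0) ≠ some (Sum.inr qy) := by simp
  have n2 : (some (Sum.inl x) : W s q0) ≠ some (Sum.inl y) := by simp [hxy]
  have n3 : (some (Sum.inr qy) : W s q0) ≠ some (Sum.inl y) := by simp
  rw [Walk.isPath_def]
  simp only [wB1, Walk.support_cons, Walk.support_nil]
  simp [List.nodup_cons, n1, n2, n3]

/-- canonical walk when `x`'s hub is a class vertex and `y`'s is the center -/
noncomputable def wB2 (qx) (hx : hub s q0 x = some (Sum.inr qx)) (hy : hub s q0 y = none) :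
    (G s q0).Walk (some (Sum.inl x)) (some (Sum.inl y)) :=
  Walk.cons (show (G s q0).Adj (some (Sum.inl x)) (some (Sum.inr qx)) by
      rw [← hx]; exact adj_leaf_hub s q0 x)
    (Walk.cons (adj_inr_none s q0 qx)
      (Walk.cons (show (G s q0).Adj (none : W s q0) (some (Sum.inl y)) by
        rw [← hy]; exact (adj_leaf_hub s q0 y).symm) Walk.nil))

lemma wB2_edges (qx) (hx : hub s q0 x = some (Sum.inr qx)) (hy : hub s q0 y = none) :
    (wB2 s q0 x y qx hx hy).edges =
      [s(some (Sum.inl x), some (Sum.inr qx)), s(some (Sum.inr qx), none),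
       s((none : W s q0), some (Sum.inl y))] := by
  simp [wB2]

lemma wB2_isPath (hxy : x ≠ y) (qx) (hx : hub s q0 x = some (Sum.inr qx))
    (hy : hub s q0 y = none) : (wB2 s q0 x y qx hx hy).IsPath := by
  have n1 : (some (Sum.inl x) : W s q0) ≠ some (Sum.inr qx) := by simp
  have n2 : (some (Sum.inl x) : W s q0) ≠ some (Sum.inl y) := by simp [hxy]
  have n3 : (some (Sum.inr qx) : W s q0) ≠ some (Sum.inl y) := by simp
  rw [Walk.isPath_def]
  simp only [wB2, Walk.support_cons, Walk.support_nil]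
  simp [List.nodup_cons, n1, n2, n3]

/-- canonical walk when both hubs are (distinct) class vertices -/
noncomputable def wB3 (qx) (hx : hub s q0 x = some (Sum.inr qx)) (qy)
    (hy : hub s q0 y = some (Sum.inr qy)) :
    (G s q0).Walk (some (Sum.inl x)) (some (Sum.inl y)) :=
  Walk.cons (show (G s q0).Adj (some (Sum.inl x)) (some (Sum.inr qx)) by
      rw [← hx]; exact adj_leaf_hub s q0 x)
    (Walk.cons (adj_inr_none s q0 qx)
      (Walk.cons ((adj_inr_none s q0 qy).symm)
        (Walk.cons (show (G s q0).Adj (some (Sum.inr qy)) (some (Sum.inl y)) by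
          rw [← hy]; exact (adj_leaf_hub s q0 y).symm) Walk.nil)))

lemma wB3_edges (qx) (hx : hub s q0 x = some (Sum.inr qx)) (qy)
    (hy : hub s q0 y = some (Sum.inr qy)) :
    (wB3 s q0 x y qx hx qy hy).edges =
      [s(some (Sum.inl x), some (Sum.inr qx)), s(some (Sum.inr qx), none),
       s((none : W s q0), some (Sum.inr qy)), s(some (Sum.inr qy), some (Sum.inl y))] := by
  simp [wB3]

lemma wB3_isPath (hxy : x ≠ y) (qx) (hx : hub s q0 x = some (Sum.inr qx)) (qy)
    (hy : hub s q0 y = some (Sum.inr qy)) (hq : qx ≠ qy) :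
    (wB3 s q0 x y qx hx qy hy).IsPath := by
  have n1 : (some (Sum.inl x) : W s q0) ≠ some (Sum.inr qx) := by simp
  have n2 : (some (Sum.inl x) : W s q0) ≠ some (Sum.inr qy) := by simp
  have n3 : (some (Sum.inl x) : W s q0) ≠ some (Sum.inl y) := by simp [hxy]
  have n4 : (some (Sum.inr qx) : W s q0) ≠ some (Sum.inr qy) := by simp [hq]
  have n5 : (some (Sum.inr qx) : W s q0) ≠ some (Sum.inl y) := by simp
  have n6 : (some (Sum.inr qy) : W s q0) ≠ some (Sum.inl y) := by simp
  rw [Walk.isPath_def]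
  simp only [wB3, Walk.support_cons, Walk.support_nil]
  simp [List.nodup_cons, n1, n2, n3, n4, n5, n6]

end walks

lemma dist_le_two (v : W s q0) : (G s q0).dist v none ≤ 2 := by
  cases v with
  | none =>
    rw [SimpleGraph.dist_self]
    omega
  | some w =>
    cases w with
    | inr q => calc (G s q0).dist (some (Sum.inr q)) none ≤ _ :=
                  dist_le (adj_inr_none s q0 q).toWalk
               _ ≤ 2 := by simp
    | inl x =>
      by_cases h : BigC s q0 (Quotient.mk s x)
      · calc (G s q0).dist (some (Sum.inl x)) none
              ≤ (Walk.cons (adj_leaf_hub s q0 x)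
                  (Walk.cons (show (G s q0).Adj (hub s q0 x) none by
                    rw [hub_of_big s q0 h]; exact adj_inr_none s q0 _) Walk.nil)).length :=
                dist_le _
          _ ≤ 2 := by simp
      · have hadj : (G s q0).Adj (some (Sum.inl x)) none := by
          rw [← hub_of_not_big s q0 h]; exact adj_leaf_hub s q0 x
        calc (G s q0).dist (some (Sum.inl x)) none ≤ _ := dist_le hadj.toWalk
          _ ≤ 2 := by simp

lemma path_len_le_four [Finite X] {u v : W s q0} (p : (G s q0).Walk u v) (hp : p.IsPath) :
    p.length ≤ 4 := by
  obtain ⟨p', hp', hlen⟩ := (conn s q0).exists_path_of_dist u v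
  have hpp : p = p' := by
    have := (acyc s q0).path_unique ⟨p, hp⟩ ⟨p', hp'⟩
    exact congrArg Subtype.val this
  rw [hpp, hlen]
  calc (G s q0).dist u v ≤ (G s q0).dist u none + (G s q0).dist none v :=
        (conn s q0).dist_triangle
    _ ≤ 4 := by
        have h1 := dist_le_two s q0 u
        have h2 := dist_le_two s q0 v
        rw [dist_comm] at h2
        omega

end MFD

lemma fitch_compl_trans {X M : Type} {ε : X → X → Set M} (hF : IsSymFitch ε) (m : M)
    {x y z : X} (hxy : x ≠ y) (hyz : y ≠ z) (hxz : x ≠ z)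
    (h1 : m ∉ ε x y) (h2 : m ∉ ε y z) : m ∉ ε x z := by
  classical
  obtain ⟨t, lab, hexp⟩ := hF
  obtain ⟨w1⟩ := t.conn (t.leaf x) (t.leaf y)
  obtain ⟨w2⟩ := t.conn (t.leaf y) (t.leaf z)
  have e1 := hexp x y hxy w1.bypass w1.bypass_isPath m
  have e2 := hexp y z hyz w2.bypass w2.bypass_isPath m
  have e3 := hexp x z hxz (w1.bypass.append w2.bypass).bypass (Walk.bypass_isPath _) m
  rw [e3]
  rintro ⟨e, he, hm⟩
  have hmem := Walk.edges_bypass_subset _ he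
  rw [Walk.edges_append, List.mem_append] at hmem
  rcases hmem with h | h
  · exact h1 (e1.mpr ⟨e, h, hm⟩)
  · exact h2 (e2.mpr ⟨e, h, hm⟩)

theorem mono_fitch_diameter_le_four {X M : Type} [Fintype X]
    (hcard : 3 ≤ Fintype.card X) (m : M)
    (ε : X → X → Set M) (hsym : ∀ x y : X, ε x y = ε y x)
    (hmono : ∀ x y : X, ε x y ⊆ {m}) (hF : IsSymFitch ε) :
    ∃ t : PhyloTree X, ∃ lab : Sym2 t.V → Set M, Explains t lab ε ∧
      ∀ (u v : t.V) (p : t.T.Walk u v), p.IsPath → p.length ≤ 4 := by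
  classical
  -- the complement relation is an equivalence
  have heqv : Equivalence (fun x y : X => x = y ∨ m ∉ ε x y) := by
    refine ⟨fun x => Or.inl rfl, ?_, ?_⟩
    · rintro x y (rfl | h)
      · exact Or.inl rfl
      · exact Or.inr (by rw [hsym]; exact h)
    · rintro x y z h1 h2
      by_cases hxz : x = z
      · exact Or.inl hxz
      rcases h1 with rfl | h1
      · rcases h2 with rfl | h2
        · exact absurd rfl hxz
        · exact Or.inr h2
      rcases h2 with rfl | h2
      · exact Or.inr h1
      by_cases hxy : x = y
      · subst hxy; exact Or.inr h2
      by_cases hyz : y = z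
      · subst hyz; exact Or.inr h1
      exact Or.inr (fitch_compl_trans hF m hxy hyz hxz h1 h2)
  set s : Setoid X := ⟨fun x y : X => x = y ∨ m ∉ ε x y, heqv⟩ with hs
  have hmkeq : ∀ x y : X, Quotient.mk s x = Quotient.mk s y ↔ (x = y ∨ m ∉ ε x y) :=
    fun x y => ⟨fun h => Quotient.exact h, fun h => Quotient.sound h⟩
  have hkey : ∀ x y : X, x ≠ y → (m ∈ ε x y ↔ Quotient.mk s x ≠ Quotient.mk s y) := by
    intro x y hxy
    constructor
    · intro hm h
      rcases (hmkeq x y).mp h with rfl | h'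
      · exact hxy rfl
      · exact h' hm
    · intro h
      by_contra hm
      exact h ((hmkeq x y).mpr (Or.inr hm))
  -- choice of the distinguished class q0
  have hXne : Nonempty X := Fintype.card_pos_iff.mp (by omega)
  obtain ⟨x1⟩ := hXne
  obtain ⟨q0, hq0c⟩ : ∃ q0 : Quotient s, (∃ q : Quotient s, q ≠ q0 ∧
      ∃ a b : X, a ≠ b ∧ Quotient.mk s a = q ∧ Quotient.mk s b = q) →
      ∃ a b : X, a ≠ b ∧ Quotient.mk s a = q0 ∧ Quotient.mk s b = q0 := by
    by_cases h : ∃ q : Quotient s, ∃ a b : X, a ≠ b ∧ Quotient.mk s a = q ∧ Quotient.mk s b = q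
    · exact ⟨h.choose, fun _ => h.choose_spec⟩
    · refine ⟨Quotient.mk s x1, ?_⟩
      rintro ⟨q, _, hq⟩
      exact absurd ⟨q, hq⟩ h
  have hq0 : (∃ q, MFD.BigC s q0 q) →
      ∃ a b : X, a ≠ b ∧ Quotient.mk s a = q0 ∧ Quotient.mk s b = q0 := by
    rintro ⟨q, hq⟩
    exact hq0c ⟨q, hq.1, hq.2⟩
  obtain ⟨a3, b3, c3, hab3, hac3, hbc3⟩ := Fintype.two_lt_card_iff.mp (by omega : 2 < Fintype.card X)
  -- auxiliary facts
  have hub_none_not_big : ∀ x : X, MFD.hub s q0 x = none → ¬ MFD.BigC s q0 (Quotient.mk s x) := by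
    intro x hx hb
    rw [MFD.hub_of_big s q0 hb] at hx
    cases hx
  have hub_inr_val : ∀ (x : X) (q), MFD.hub s q0 x = some (Sum.inr q) →
      (q : Quotient s) = Quotient.mk s x := by
    intro x q hx
    by_cases hb : MFD.BigC s q0 (Quotient.mk s x)
    · rw [MFD.hub_of_big s q0 hb] at hx
      have := Option.some.inj hx
      have := Sum.inr.inj this
      exact congrArg Subtype.val this.symm
    · rw [MFD.hub_of_not_big s q0 hb] at hx
      cases hx
  refine ⟨{ V := MFD.W s q0
            finV := Fintype.ofFinite _
            T := MFD.G s q0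
            conn := MFD.conn s q0
            acyc := MFD.acyc s q0
            leaf := fun x => some (Sum.inl x)
            leaf_inj := by
              intro a b h
              exact Sum.inl.inj (Option.some.inj h)
            leaf_deg := MFD.leaf_deg s q0
            inner_deg := by
              intro v hv
              match v with
              | none => exact MFD.inner_deg_none s q0 hq0 ⟨a3, b3, c3, hab3, hac3, hbc3⟩
              | some (Sum.inl x) => exact absurd ⟨x, rfl⟩ hv
              | some (Sum.inr q) => exact MFD.inner_deg_inr s q0 q },
    MFD.lab s q0 M m, ?_, ?_⟩
  · -- Explains
    intro x y hxy p hp m'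
    by_cases hm' : m' = m
    swap
    · refine iff_of_false (fun h => hm' (Set.eq_of_mem_singleton (hmono x y h))) ?_
      rintro ⟨e, he, hm⟩
      exact hm' (Set.eq_of_mem_singleton (MFD.lab_subset s q0 M m e hm))
    rw [hm', hkey x y hxy]
    -- case analysis on the hubs
    cases hhx : MFD.hub s q0 x with
    | some wx =>
      cases wx with
      | inl x' => exact absurd hhx (MFD.hub_ne_inl s q0 x x')
      | inr qx =>
        cases hhy : MFD.hub s q0 y with
        | some wy =>
          cases wy with
          | inl y' => exact absurd hhy (MFD.hub_ne_inl s q0 y y')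
          | inr qy =>
            by_cases hq : qx = qy
            · -- same big class: no m-edge, classes equal
              subst hq
              have hEq : MFD.hub s q0 x = MFD.hub s q0 y := by rw [hhx, hhy]
              have hpw : p = MFD.wA s q0 x y hEq :=
                congrArg Subtype.val
                  ((MFD.acyc s q0).path_unique ⟨p, hp⟩ ⟨_, MFD.wA_isPath s q0 x y hxy hEq⟩)
              subst hpw
              have hcls : Quotient.mk s x = Quotient.mk s y := by
                rw [← hub_inr_val x qx hhx, ← hub_inr_val y qx hhy]
              refine iff_of_false (fun h => h hcls) ?_
              rintro ⟨e, he, hm⟩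
              rw [MFD.wA_edges, hhx] at he
              simp only [List.mem_cons, List.not_mem_nil, or_false] at he
              rcases he with rfl | rfl
              · exact MFD.mk2_inl_inr s q0 x qx ((MFD.mem_lab_iff s q0 M m _ _).mp hm)
              · exact MFD.mk2_inr_inl s q0 y qx ((MFD.mem_lab_iff s q0 M m _ _).mp hm)
            · -- distinct big classes
              have hpw : p = MFD.wB3 s q0 x y qx hhx qy hhy :=
                congrArg Subtype.val
                  ((MFD.acyc s q0).path_unique ⟨p, hp⟩
                    ⟨_, MFD.wB3_isPath s q0 x y hxy qx hhx qy hhy hq⟩)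
              subst hpw
              have hcls : Quotient.mk s x ≠ Quotient.mk s y := by
                intro h
                apply hq
                apply Subtype.ext
                rw [hub_inr_val x qx hhx, hub_inr_val y qy hhy, h]
              refine iff_of_true hcls ?_
              refine ⟨s(some (Sum.inr qx), none), ?_, ?_⟩
              · rw [MFD.wB3_edges]
                simp
              · exact (MFD.mem_lab_iff s q0 M m _ _).mpr (MFD.mk2_inr_none s q0 qx)
        | none =>
          -- x big, y at center
          have hpw : p = MFD.wB2 s q0 x y qx hhx hhy :=
            congrArg Subtype.val
              ((MFD.acyc s q0).path_unique ⟨p, hp⟩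
                ⟨_, MFD.wB2_isPath s q0 x y hxy qx hhx hhy⟩)
          subst hpw
          have hcls : Quotient.mk s x ≠ Quotient.mk s y := by
            intro h
            have := MFD.hub_eq_of_mk_eq s q0 h
            rw [hhx, hhy] at this
            cases this
          refine iff_of_true hcls ?_
          refine ⟨s(some (Sum.inr qx), none), ?_, ?_⟩
          · rw [MFD.wB2_edges]
            simp
          · exact (MFD.mem_lab_iff s q0 M m _ _).mpr (MFD.mk2_inr_none s q0 qx)
    | none =>
      cases hhy : MFD.hub s q0 y with
      | some wy =>
        cases wy with
        | inl y' => exact absurd hhy (MFD.hub_ne_inl s q0 y y')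
        | inr qy =>
          have hpw : p = MFD.wB1 s q0 x y hhx qy hhy :=
            congrArg Subtype.val
              ((MFD.acyc s q0).path_unique ⟨p, hp⟩
                ⟨_, MFD.wB1_isPath s q0 x y hxy hhx qy hhy⟩)
          subst hpw
          have hcls : Quotient.mk s x ≠ Quotient.mk s y := by
            intro h
            have := MFD.hub_eq_of_mk_eq s q0 h
            rw [hhx, hhy] at this
            cases this
          refine iff_of_true hcls ?_
          refine ⟨s((none : MFD.W s q0), some (Sum.inr qy)), ?_, ?_⟩
          · rw [MFD.wB1_edges]
            simp
          · exact (MFD.mem_lab_iff s q0 M m _ _).mpr (MFD.mk2_none_inr s q0 qy)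
      | none =>
        -- both at the center
        have hEq : MFD.hub s q0 x = MFD.hub s q0 y := by rw [hhx, hhy]
        have hpw : p = MFD.wA s q0 x y hEq :=
          congrArg Subtype.val
            ((MFD.acyc s q0).path_unique ⟨p, hp⟩ ⟨_, MFD.wA_isPath s q0 x y hxy hEq⟩)
        subst hpw
        have hrhs : (∃ e ∈ (MFD.wA s q0 x y hEq).edges, m ∈ MFD.lab s q0 M m e) ↔
            (Quotient.mk s x ≠ q0 ∨ Quotient.mk s y ≠ q0) := by
          rw [MFD.wA_edges, hhx]
          constructor
          · rintro ⟨e, he, hm⟩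
            simp only [List.mem_cons, List.not_mem_nil, or_false] at he
            rcases he with rfl | rfl
            · exact Or.inl ((MFD.mk2_inl_none s q0 x).mp ((MFD.mem_lab_iff s q0 M m _ _).mp hm))
            · exact Or.inr ((MFD.mk2_none_inl s q0 y).mp ((MFD.mem_lab_iff s q0 M m _ _).mp hm))
          · rintro (h | h)
            · exact ⟨s(some (Sum.inl x), none), by simp,
                (MFD.mem_lab_iff s q0 M m _ _).mpr ((MFD.mk2_inl_none s q0 x).mpr h)⟩
            · exact ⟨s((none : MFD.W s q0), some (Sum.inl y)), by simp,
                (MFD.mem_lab_iff s q0 M m _ _).mpr ((MFD.mk2_none_inl s q0 y).mpr h)⟩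
        rw [hrhs]
        constructor
        · intro hne
          by_contra hcon
          push_neg at hcon
          exact hne (hcon.1.trans hcon.2.symm)
        · intro h heq
          have hnbx := hub_none_not_big x hhx
          have hnby := hub_none_not_big y hhy
          have hx0 : Quotient.mk s x = q0 := by
            by_contra hx0
            exact hnbx ⟨hx0, x, y, hxy, rfl, heq.symm⟩
          have hy0 : Quotient.mk s y = q0 := heq ▸ hx0
          rcases h with h | h
          · exact h hx0
          · exact h hy0
  · -- diameter
    intro u v p hp
    exact MFD.path_len_le_four s q0 p hp
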